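/- Let N,d ≥ 1, let S = (s_ij) ∈ ℝ^{N×N} be symmetric with nonnegative entries, let D̃ = diag(d̃_1,…,d̃_N) with d̃_i = Σ_j s_ij, and let Δ = D̃ − S. Let λ₁ be the largest eigenvalue of Δ and let τ > 0 satisfy τ·λ₁ ≤ 1. Define the diffusion iteration Z^(k+1) = (I − τΔ)Z^(k), i.e. row-wise z_i^(k+1) = (1 − τ Σ_j s_ij) z_i^(k) + τ Σ_j s_ij z_j^(k), starting from any Z^(0) ∈ ℝ^{N×d}. Define the energy E(Z,k) = ‖Z − Z^(k)‖_F² + (τ/2) Σ_{i,j} s_ij ‖z_i − z_j‖₂². Then for every k ≥ 1, E(Z^(k+1), k) ≤ E(Z^(k), k−1). -/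

import Mathlib

open Finset Matrix

section Aux

variable {N : ℕ}

private lemma my_psd_add {A B : Matrix (Fin N) (Fin N) ℝ}
    (hA : A.PosSemidef) (hB : B.PosSemidef) : (A + B).PosSemidef := by
  exact hA.add hB

private lemma my_psd_smul {A : Matrix (Fin N) (Fin N) ℝ}
    (hA : A.PosSemidef) {c : ℝ} (hc : 0 ≤ c) : (c • A).PosSemidef := by
  have hH : (c • A).IsHermitian := by
    unfold Matrix.IsHermitian
    rw [conjTranspose_smul, hA.1.eq]
    simp
  exact hA.smul hc

/-- Laplacian quadratic form identity. -/
private lemma dirichlet_eq (s : Matrix (Fin N) (Fin N) ℝ) (hs : s.IsSymm)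
    (v : Fin N → ℝ) :
    ∑ i, ∑ j, s i j * (v i - v j) ^ 2
      = 2 * (v ⬝ᵥ ((Matrix.diagonal (fun i => ∑ j, s i j) - s) *ᵥ v)) := by
  have hsym : ∀ i j, s j i = s i j := hs.apply
  have h1 : ∑ i, ∑ j, s i j * (v i - v j) ^ 2
      = ∑ i, ∑ j, (s i j * v i ^ 2 + s i j * v j ^ 2 - 2 * (s i j * (v i * v j))) := by
    refine Finset.sum_congr rfl fun i _ => Finset.sum_congr rfl fun j _ => by ring
  have h2 : ∑ i, ∑ j, s i j * v j ^ 2 = ∑ i, ∑ j, s i j * v i ^ 2 := by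
    rw [Finset.sum_comm]
    refine Finset.sum_congr rfl fun i _ => Finset.sum_congr rfl fun j _ => by
      rw [hsym]
  have h3 : v ⬝ᵥ ((Matrix.diagonal (fun i => ∑ j, s i j) - s) *ᵥ v)
      = ∑ i, ∑ j, (s i j * v i ^ 2 - s i j * (v i * v j)) := by
    simp only [dotProduct, mulVec, Matrix.sub_apply, diagonal_apply, Matrix.sub_apply]
    refine Finset.sum_congr rfl fun i _ => ?_
    simp only [sub_mul, ite_mul, zero_mul, Finset.sum_sub_distrib, Finset.sum_ite_eq,
      Finset.mem_univ, if_true]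
    have e1 : v i * ((∑ x, s i x) * v i) = ∑ x, (s i x * v i ^ 2) := by
      rw [Finset.sum_mul, Finset.mul_sum]
      exact Finset.sum_congr rfl fun x _ => by ring
    have e2 : v i * (∑ x, s i x * v x) = ∑ x, s i x * (v i * v x) := by
      rw [Finset.mul_sum]
      exact Finset.sum_congr rfl fun x _ => by ring
    rw [mul_sub, e1, e2]
  rw [h1, h3]
  simp only [Finset.sum_sub_distrib, Finset.sum_add_distrib, ← Finset.mul_sum]
  rw [h2]
  ring

open scoped MatrixOrder in
private lemma my_exists_sqrt {A : Matrix (Fin N) (Fin N) ℝ} (hA : A.PosSemidef) :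
    ∃ R : Matrix (Fin N) (Fin N) ℝ, R * R = A ∧ R.IsHermitian :=
  ⟨CFC.sqrt A, CFC.sqrt_mul_sqrt_self A hA.nonneg, (CFC.sqrt_nonneg A).posSemidef.1⟩

end Aux

/-- energy descent of the diffusion iteration with static
symmetric nonnegative coupling matrix `s`, Laplacian `Δ`, largest eigenvalue
`lam1`, and step size `τ` with `τ * lam1 ≤ 1`. -/
theorem stmt_0 (N d : ℕ) (hN : 1 ≤ N) (hd : 1 ≤ d)
    (s : Matrix (Fin N) (Fin N) ℝ)
    (hs_symm : s.IsSymm) (hs_nonneg : ∀ i j, 0 ≤ s i j)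
    (Δ : Matrix (Fin N) (Fin N) ℝ)
    (hΔ : Δ = Matrix.diagonal (fun i => ∑ j, s i j) - s)
    (hΔH : Δ.IsHermitian)
    (lam1 : ℝ) (hlam1 : IsGreatest (Set.range hΔH.eigenvalues) lam1)
    (τ : ℝ) (hτ : 0 < τ) (hτ1 : τ * lam1 ≤ 1)
    (Z : ℕ → Matrix (Fin N) (Fin d) ℝ)
    (hZ : ∀ k (i : Fin N) (c : Fin d), Z (k + 1) i c =
      (1 - τ * ∑ j, s i j) * Z k i c + τ * ∑ j, s i j * Z k j c) :
    ∀ k, 1 ≤ k →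
      ((∑ i, ∑ c, (Z (k + 1) i c - Z k i c) ^ 2)
          + (τ / 2) * ∑ i, ∑ j, s i j * ∑ c, (Z (k + 1) i c - Z (k + 1) j c) ^ 2)
        ≤ ((∑ i, ∑ c, (Z k i c - Z (k - 1) i c) ^ 2)
          + (τ / 2) * ∑ i, ∑ j, s i j * ∑ c, (Z k i c - Z k j c) ^ 2) := by
  intro k hk
  obtain ⟨m, rfl⟩ : ∃ m, k = m + 1 := ⟨k - 1, (Nat.succ_pred_eq_of_pos hk).symm⟩
  set Q : Matrix (Fin N) (Fin N) ℝ := 1 - τ • Δ with hQdef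
  -- Q is Hermitian and symmetric-transpose
  have hQH : Q.IsHermitian := by
    rw [hQdef]
    unfold Matrix.IsHermitian
    rw [conjTranspose_sub, conjTranspose_smul, hΔH.eq, conjTranspose_one]
    simp
  have hQT : Qᵀ = Q := by
    rw [← conjTranspose_eq_transpose_of_trivial]; exact hQH.eq
  have hΔT : Δᵀ = Δ := by
    rw [← conjTranspose_eq_transpose_of_trivial]; exact hΔH.eq
  -- matrix form of the iteration
  have hZmat : ∀ n, Z (n + 1) = Q * Z n := by
    intro n
    funext i c
    rw [hZ n i c]
    simp only [hQdef, hΔ, Matrix.mul_apply, Matrix.sub_apply, Matrix.smul_apply,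
      Matrix.one_apply, diagonal_apply, smul_eq_mul]
    have : ∀ j, ((if i = j then (1:ℝ) else 0) - τ * ((if i = j then ∑ j', s i j' else 0) - s i j))
        * Z n j c
        = (if i = j then Z n j c else 0) - τ * (if i = j then (∑ j', s i j') * Z n j c else 0)
          + τ * (s i j * Z n j c) := by
      intro j
      by_cases h : i = j <;> simp [h] <;> ring
    rw [Finset.sum_congr rfl fun j _ => this j]
    simp only [Finset.sum_add_distrib, Finset.sum_sub_distrib, Finset.sum_ite_eq,
      Finset.mem_univ, if_true, ← Finset.mul_sum]
    ring
  -- Δ is positive semidefinite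
  have hΔpsd : Δ.PosSemidef := by
    refine Matrix.PosSemidef.of_dotProduct_mulVec_nonneg hΔH fun x => ?_
    have h := dirichlet_eq s hs_symm x
    have hnn : 0 ≤ ∑ i, ∑ j, s i j * (x i - x j) ^ 2 :=
      Finset.sum_nonneg fun i _ => Finset.sum_nonneg fun j _ =>
        mul_nonneg (hs_nonneg i j) (sq_nonneg _)
    rw [← hΔ] at h
    have : star x = x := by simp
    rw [this]
    nlinarith [hnn, h]
  -- Q is positive semidefinite via the spectral theorem
  have hQpsd : Q.PosSemidef := by
    set U : Matrix (Fin N) (Fin N) ℝ := (hΔH.eigenvectorUnitary : Matrix (Fin N) (Fin N) ℝ)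
      with hU
    have hUU : U * star U = 1 := (Matrix.mem_unitaryGroup_iff).mp (hΔH.eigenvectorUnitary).2
    have hspec : Δ = U * Matrix.diagonal (fun i => hΔH.eigenvalues i) * star U := by
      have := hΔH.spectral_theorem
      simpa using this
    have hQdec : Q = U * Matrix.diagonal (fun i => 1 - τ * hΔH.eigenvalues i) * star U := by
      have hdd : Matrix.diagonal (fun i => 1 - τ * hΔH.eigenvalues i)
          = Matrix.diagonal (fun _ => (1:ℝ)) - τ • Matrix.diagonal (fun i => hΔH.eigenvalues i) := by
        ext i j
        by_cases h : i = j <;> simp [Matrix.diagonal_apply, h]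
      rw [hQdef, hdd, Matrix.mul_sub, Matrix.sub_mul, Matrix.mul_smul, Matrix.smul_mul,
        ← hspec, Matrix.diagonal_one, mul_one, hUU]
    rw [hQdec]
    have hdiag : (Matrix.diagonal (fun i => 1 - τ * hΔH.eigenvalues i)).PosSemidef := by
      refine Matrix.PosSemidef.diagonal fun i => ?_
      have h1 : hΔH.eigenvalues i ≤ lam1 := hlam1.2 ⟨i, rfl⟩
      have h2 : τ * hΔH.eigenvalues i ≤ τ * lam1 :=
        mul_le_mul_of_nonneg_left h1 hτ.le
      simp only [Pi.zero_apply]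
      linarith
    have := hdiag.mul_mul_conjTranspose_same U
    simpa [Matrix.star_eq_conjTranspose] using this
  -- key PSD matrices
  have h1Q : ((1 : Matrix (Fin N) (Fin N) ℝ) + Q).PosSemidef :=
    my_psd_add Matrix.PosSemidef.one hQpsd
  obtain ⟨R, hR2', hRH'⟩ := my_exists_sqrt hΔpsd
  have hR2 : R * R = Δ := hR2'
  have hRH : R.IsHermitian := hRH'
  have hRΔR : R * Δ * R = Δ * Δ := by
    conv_lhs => rw [← hR2]
    rw [← mul_assoc R R R, mul_assoc (R * R) R R, hR2]
  have hAeq : (1 : Matrix (Fin N) (Fin N) ℝ) - Q * Q = τ • (R * (1 + Q) * R) := by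
    rw [hQdef]
    simp only [mul_sub, sub_mul, mul_add, add_mul, mul_one, one_mul,
      Matrix.mul_smul, Matrix.smul_mul, smul_smul, smul_sub, smul_add]
    rw [hRΔR, hR2]
    module
  have hApsd : ((1 : Matrix (Fin N) (Fin N) ℝ) - Q * Q).PosSemidef := by
    rw [hAeq]
    refine my_psd_smul ?_ hτ.le
    have := h1Q.conjTranspose_mul_mul_same R
    rwa [hRH.eq] at this
  have hBeq : Δ - Q * Δ * Q = τ • (Δ * (1 + Q) * Δ) := by
    rw [hQdef]
    simp only [mul_sub, sub_mul, mul_add, add_mul, mul_one, one_mul,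
      Matrix.mul_smul, Matrix.smul_mul, smul_smul, smul_sub, smul_add, mul_assoc]
    module
  have hBpsd : (Δ - Q * Δ * Q).PosSemidef := by
    rw [hBeq]
    refine my_psd_smul ?_ hτ.le
    have := h1Q.conjTranspose_mul_mul_same Δ
    rwa [hΔH.eq] at this
  -- per-vector quadratic form inequalities
  have hvec : ∀ M : Matrix (Fin N) (Fin N) ℝ, Mᵀ = M →
      ∀ x : Fin N → ℝ, x ᵥ* M = M *ᵥ x := by
    intro M hM x
    conv_lhs => rw [← hM]
    exact vecMul_transpose M x
  have key : ∀ y u : Fin N → ℝ,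
      (Q *ᵥ y) ⬝ᵥ (Q *ᵥ y) + τ * ((Q *ᵥ u) ⬝ᵥ (Δ *ᵥ (Q *ᵥ u)))
        ≤ y ⬝ᵥ y + τ * (u ⬝ᵥ (Δ *ᵥ u)) := by
    intro y u
    have ha := hApsd.dotProduct_mulVec_nonneg y
    have hb := hBpsd.dotProduct_mulVec_nonneg u
    have hsy : star y = y := by simp
    have hsu : star u = u := by simp
    rw [hsy] at ha; rw [hsu] at hb
    rw [sub_mulVec, dotProduct_sub, one_mulVec] at ha
    rw [sub_mulVec, dotProduct_sub] at hb
    have e1 : y ⬝ᵥ ((Q * Q) *ᵥ y) = (Q *ᵥ y) ⬝ᵥ (Q *ᵥ y) := by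
      rw [← mulVec_mulVec, dotProduct_mulVec, hvec Q hQT]
    have e2 : u ⬝ᵥ ((Q * Δ * Q) *ᵥ u) = (Q *ᵥ u) ⬝ᵥ (Δ *ᵥ (Q *ᵥ u)) := by
      rw [← mulVec_mulVec, ← mulVec_mulVec, dotProduct_mulVec, hvec Q hQT,
        dotProduct_mulVec, hvec Δ hΔT]
    rw [e1] at ha
    rw [e2] at hb
    nlinarith [ha, hb, hτ.le]
  -- columns
  set Y : Matrix (Fin N) (Fin d) ℝ := Z (m + 1) - Z m with hY
  have hdiff : Z (m + 1 + 1) - Z (m + 1) = Q * Y := by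
    rw [hY, Matrix.mul_sub, ← hZmat, ← hZmat]
  have hcol : ∀ (M : Matrix (Fin N) (Fin d) ℝ) (c : Fin d) (i : Fin N),
      (Q * M) i c = (Q *ᵥ (fun j => M j c)) i := by
    intro M c i
    simp [Matrix.mul_apply, mulVec, dotProduct]
  -- rewrite energies as sums over columns
  have hE1 : ∀ (M : Matrix (Fin N) (Fin d) ℝ),
      ∑ i, ∑ c, (M i c) ^ 2 = ∑ c, (fun j => M j c) ⬝ᵥ (fun j => M j c) := by
    intro M
    rw [Finset.sum_comm]
    refine Finset.sum_congr rfl fun c _ => ?_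
    simp [dotProduct, sq]
  have hE2 : ∀ (M : Matrix (Fin N) (Fin d) ℝ),
      ∑ i, ∑ j, s i j * ∑ c, (M i c - M j c) ^ 2
        = ∑ c, 2 * ((fun j => M j c) ⬝ᵥ (Δ *ᵥ (fun j => M j c))) := by
    intro M
    have swap : ∑ i, ∑ j, s i j * ∑ c, (M i c - M j c) ^ 2
        = ∑ c, ∑ i, ∑ j, s i j * (M i c - M j c) ^ 2 :=
      calc ∑ i, ∑ j, s i j * ∑ c, (M i c - M j c) ^ 2
          = ∑ i, ∑ j, ∑ c, s i j * (M i c - M j c) ^ 2 :=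
            Finset.sum_congr rfl fun i _ => Finset.sum_congr rfl fun j _ =>
              Finset.mul_sum _ _ _
        _ = ∑ i, ∑ c, ∑ j, s i j * (M i c - M j c) ^ 2 :=
            Finset.sum_congr rfl fun i _ => Finset.sum_comm
        _ = ∑ c, ∑ i, ∑ j, s i j * (M i c - M j c) ^ 2 := Finset.sum_comm
    rw [swap]
    refine Finset.sum_congr rfl fun c _ => ?_
    rw [dirichlet_eq s hs_symm (fun j => M j c), ← hΔ]
  -- assemble
  have lhs_eq : (∑ i, ∑ c, (Z (m + 1 + 1) i c - Z (m + 1) i c) ^ 2)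
      + (τ / 2) * ∑ i, ∑ j, s i j * ∑ c, (Z (m + 1 + 1) i c - Z (m + 1 + 1) j c) ^ 2
      = ∑ c, ((Q *ᵥ (fun j => Y j c)) ⬝ᵥ (Q *ᵥ (fun j => Y j c))
          + τ * ((Q *ᵥ (fun j => Z (m+1) j c)) ⬝ᵥ (Δ *ᵥ (Q *ᵥ (fun j => Z (m+1) j c))))) := by
    have d1 : ∀ i c, Z (m + 1 + 1) i c - Z (m + 1) i c = (Q *ᵥ (fun j => Y j c)) i := by
      intro i c
      have := congrFun (congrFun hdiff i) c
      simp only [Matrix.sub_apply] at this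
      rw [this, hcol]
    have d2 : ∀ i c, Z (m + 1 + 1) i c = (Q *ᵥ (fun j => Z (m+1) j c)) i := by
      intro i c
      have := congrFun (congrFun (hZmat (m+1)) i) c
      rw [this, hcol]
    calc (∑ i, ∑ c, (Z (m + 1 + 1) i c - Z (m + 1) i c) ^ 2)
        + (τ / 2) * ∑ i, ∑ j, s i j * ∑ c, (Z (m + 1 + 1) i c - Z (m + 1 + 1) j c) ^ 2
        = (∑ c, (Q *ᵥ (fun j => Y j c)) ⬝ᵥ (Q *ᵥ (fun j => Y j c)))
          + (τ / 2) * ∑ c, 2 * ((Q *ᵥ (fun j => Z (m+1) j c)) ⬝ᵥ (Δ *ᵥ (Q *ᵥ (fun j => Z (m+1) j c)))) := by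
          congr 1
          · rw [show (∑ i, ∑ c, (Z (m + 1 + 1) i c - Z (m + 1) i c) ^ 2)
                = ∑ i, ∑ c, ((Q *ᵥ (fun j => Y j c)) i) ^ 2 from
              Finset.sum_congr rfl fun i _ => Finset.sum_congr rfl fun c _ => by rw [d1]]
            rw [Finset.sum_comm]
            refine Finset.sum_congr rfl fun c _ => ?_
            simp [dotProduct, sq]
          · congr 1
            rw [show (∑ i, ∑ j, s i j * ∑ c, (Z (m + 1 + 1) i c - Z (m + 1 + 1) j c) ^ 2)
                = ∑ i, ∑ j, s i j * ∑ c,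
                    ((Q *ᵥ (fun j' => Z (m+1) j' c)) i - (Q *ᵥ (fun j' => Z (m+1) j' c)) j) ^ 2 from
              Finset.sum_congr rfl fun i _ => Finset.sum_congr rfl fun j _ => by
                congr 1
                exact Finset.sum_congr rfl fun c _ => by rw [d2, d2]]
            have := hE2 (Matrix.of fun i c => (Q *ᵥ (fun j' => Z (m+1) j' c)) i)
            simpa using this
      _ = _ := by
          rw [Finset.mul_sum, ← Finset.sum_add_distrib]
          refine Finset.sum_congr rfl fun c _ => by ring
  have rhs_eq : (∑ i, ∑ c, (Z (m + 1) i c - Z (m + 1 - 1) i c) ^ 2)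
      + (τ / 2) * ∑ i, ∑ j, s i j * ∑ c, (Z (m + 1) i c - Z (m + 1) j c) ^ 2
      = ∑ c, ((fun j => Y j c) ⬝ᵥ (fun j => Y j c)
          + τ * ((fun j => Z (m+1) j c) ⬝ᵥ (Δ *ᵥ (fun j => Z (m+1) j c)))) := by
    have hm : m + 1 - 1 = m := rfl
    rw [hm]
    have e1 : (∑ i, ∑ c, (Z (m + 1) i c - Z m i c) ^ 2)
        = ∑ c, (fun j => Y j c) ⬝ᵥ (fun j => Y j c) := by
      have := hE1 Y
      rw [← this]
      refine Finset.sum_congr rfl fun i _ => Finset.sum_congr rfl fun c _ => by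
        simp [hY, Matrix.sub_apply]
    rw [e1, hE2 (Z (m+1)), Finset.mul_sum, ← Finset.sum_add_distrib]
    refine Finset.sum_congr rfl fun c _ => by ring
  rw [lhs_eq, rhs_eq]
  exact Finset.sum_le_sum fun c _ => key (fun j => Y j c) (fun j => Z (m+1) j c)
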